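/- Let a₁ and b₁ be commuting square complex matrices of the same size, let u, v be complex column vectors of matching length, and set w = a₁·v − b₁·u. If (φ(a₁+b₁) − φ(a₁))·u = (exp(a₁)·φ(b₁) − φ(a₁+b₁))·v, then (φ(a₁+b₁) − φ(a₁))·w = 0, where for a square matrix m, φ(m) = Σ_{k≥0} m^k/(k+1)!. -/

import Mathlib

open Matrix

/-- `φ` applied to a square complex matrix: `φ(m) = Σ_{k≥0} m^k / (k+1)!`,
the power series of `φ(z) = (e^z - 1)/z` (with `φ(0) = 1`). -/
noncomputable def matPhi {m : Type*} [Fintype m] [DecidableEq m]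
    (A : Matrix m m ℂ) : Matrix m m ℂ :=
  ∑' k : ℕ, (((k + 1).factorial : ℂ))⁻¹ • A ^ k

lemma matPhi_summable {m : Type*} [Fintype m] [DecidableEq m] (A : Matrix m m ℂ) :
    Summable (fun k : ℕ => (((k + 1).factorial : ℂ))⁻¹ • A ^ k) := by
  letI : SeminormedRing (Matrix m m ℂ) := Matrix.linftyOpSemiNormedRing
  letI : NormedRing (Matrix m m ℂ) := Matrix.linftyOpNormedRing
  letI : NormedAlgebra ℂ (Matrix m m ℂ) := Matrix.linftyOpNormedAlgebra
  refine Summable.of_norm_bounded (NormedSpace.norm_expSeries_summable' (𝕂 := ℂ) A) ?_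
  intro k
  rw [norm_smul, norm_smul]
  gcongr
  rw [norm_inv, norm_inv]
  gcongr
  · simpa using k.factorial_pos
  · simp only [Complex.norm_natCast]
    exact_mod_cast Nat.factorial_le (Nat.le_succ k)

lemma mul_matPhi_eq {m : Type*} [Fintype m] [DecidableEq m] (A : Matrix m m ℂ) :
    A * matPhi A = NormedSpace.exp A - 1 := by
  have hs := matPhi_summable A
  have h1 : A * matPhi A = ∑' k : ℕ, (((k + 1).factorial : ℂ))⁻¹ • A ^ (k + 1) := by
    rw [matPhi, ← Summable.tsum_mul_left A hs]
    congr 1; funext k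
    rw [mul_smul_comm, pow_succ']
  have hexp : NormedSpace.exp A = ∑' n : ℕ, ((n.factorial : ℂ))⁻¹ • A ^ n := by
    rw [NormedSpace.exp_eq_tsum ℂ]
  have hsum : Summable (fun n : ℕ => ((n.factorial : ℂ))⁻¹ • A ^ n) := by
    letI : SeminormedRing (Matrix m m ℂ) := Matrix.linftyOpSemiNormedRing
    letI : NormedRing (Matrix m m ℂ) := Matrix.linftyOpNormedRing
    letI : NormedAlgebra ℂ (Matrix m m ℂ) := Matrix.linftyOpNormedAlgebra
    exact NormedSpace.expSeries_summable' A
  have h2 := Summable.tsum_eq_zero_add hsum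
  simp only [Nat.factorial_zero, Nat.cast_one, inv_one, pow_zero, one_smul] at h2
  rw [hexp, h2, h1]
  abel

lemma commute_matPhi {m : Type*} [Fintype m] [DecidableEq m] {A B : Matrix m m ℂ}
    (h : Commute B A) : Commute B (matPhi A) := by
  exact Commute.tsum_right B fun k => ((h.pow_right k).smul_right _)

/-- Equation (7): if `a₁`, `b₁` commute, `w = a₁ * v - b₁ * u`, and
`(φ(a₁+b₁) - φ(a₁)) * u = (exp a₁ * φ(b₁) - φ(a₁+b₁)) * v`, then
`(φ(a₁+b₁) - φ(a₁)) * w = 0`. -/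
theorem matPhi_w_eq_zero {m : Type*} [Fintype m] [DecidableEq m]
    (a₁ b₁ : Matrix m m ℂ) (hcomm : a₁ * b₁ = b₁ * a₁)
    (u v : Matrix m Unit ℂ) (w : Matrix m Unit ℂ) (hw : w = a₁ * v - b₁ * u)
    (h : (matPhi (a₁ + b₁) - matPhi a₁) * u =
      (NormedSpace.exp a₁ * matPhi b₁ - matPhi (a₁ + b₁)) * v) :
    (matPhi (a₁ + b₁) - matPhi a₁) * w = 0 := by
  set P := matPhi (a₁ + b₁) with hPdef
  set Q := matPhi a₁ with hQdef
  set R := matPhi b₁ with hRdef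
  set Ea := NormedSpace.exp a₁ with hEa
  set Eb := NormedSpace.exp b₁ with hEb
  have hba : Commute b₁ a₁ := hcomm.symm
  have cbP : Commute b₁ P := commute_matPhi (hba.add_right (Commute.refl b₁))
  have caP : Commute a₁ P := commute_matPhi ((Commute.refl a₁).add_right hcomm)
  have caQ : Commute a₁ Q := commute_matPhi (Commute.refl a₁)
  have cbEa : Commute b₁ Ea := Commute.exp_right hba
  have cbQ : Commute b₁ Q := commute_matPhi hba
  have hP : (a₁ + b₁) * P = Ea * Eb - 1 := by
    rw [hPdef, mul_matPhi_eq, hEa, hEb, Matrix.exp_add_of_commute a₁ b₁ hcomm]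
  have hQ : a₁ * Q = Ea - 1 := mul_matPhi_eq a₁
  have hR : b₁ * R = Eb - 1 := mul_matPhi_eq b₁
  -- the key matrix identity
  have key : (P - Q) * a₁ - b₁ * (Ea * R - P) = 0 := by
    have e1 : Q * a₁ = Ea - 1 := by rw [← caQ.eq, hQ]
    have e2 : b₁ * (Ea * R) = Ea * Eb - Ea := by
      rw [← mul_assoc, cbEa.eq, mul_assoc, hR, mul_sub, mul_one]
    have e4 : P * (a₁ + b₁) = Ea * Eb - 1 := by
      rw [← (caP.add_left cbP).eq, hP]
    calc (P - Q) * a₁ - b₁ * (Ea * R - P)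
        = P * (a₁ + b₁) - Q * a₁ - b₁ * (Ea * R) := by
          rw [mul_add, sub_mul, mul_sub, cbP.eq]; abel
      _ = 0 := by rw [e1, e2, e4]; abel
  have hbPQ : (P - Q) * b₁ = b₁ * (P - Q) := by
    rw [sub_mul, mul_sub, cbP.eq, cbQ.eq]
  have h2 : (P - Q) * (b₁ * u) = b₁ * ((Ea * R - P) * v) := by
    rw [← Matrix.mul_assoc, hbPQ, Matrix.mul_assoc, h]
  rw [hw, Matrix.mul_sub, h2, ← Matrix.mul_assoc, ← Matrix.mul_assoc, ← Matrix.sub_mul,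
    key, Matrix.zero_mul]
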